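/- Let R be a commutative Noetherian ring, I and J ideals of R, M an R-module, and i a non-negative integer. Then Supp(H^i_{I,J}(M)) ⊆ Supp(M) ∩ W(I,J). -/

import Mathlib

open CategoryTheory

/-- The `(I,J)`-torsion submodule `Γ_{I,J}(M) = {x ∈ M : Iⁿ x ⊆ J x for n ≫ 1}`;
note that `Iⁿ x ⊆ J x` is equivalent to `Iⁿ ≤ J + ann_R(x)`. -/
def pairTorsion {R : Type} [CommRing R] (I J : Ideal R) (M : Type) [AddCommGroup M]
    [Module R M] : Submodule R M where
  carrier := {x | ∃ n : ℕ, I ^ n ≤ J + Ideal.torsionOf R M x}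
  zero_mem' := ⟨0, by simp [Ideal.torsionOf_zero]⟩
  add_mem' := by
    rintro x y ⟨n, hn⟩ ⟨m, hm⟩
    refine ⟨n + m, ?_⟩
    rw [pow_add]
    refine le_trans (Ideal.mul_mono hn hm) (Ideal.mul_le.mpr fun r hr s hs => ?_)
    rw [Submodule.add_eq_sup, Submodule.mem_sup] at hr hs ⊢
    obtain ⟨j1, hj1, a, ha, rfl⟩ := hr
    obtain ⟨j2, hj2, b, hb, rfl⟩ := hs
    refine ⟨j1 * (j2 + b) + a * j2, ?_, a * b, ?_, by ring⟩
    · exact Ideal.add_mem _ (Ideal.mul_mem_right _ _ hj1) (Ideal.mul_mem_left _ _ hj2)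
    · rw [Ideal.mem_torsionOf_iff] at ha hb ⊢
      have h1 : (a * b) • x = 0 := by rw [mul_comm, mul_smul, ha, smul_zero]
      have h2 : (a * b) • y = 0 := by rw [mul_smul, hb, smul_zero]
      rw [smul_add, h1, h2, add_zero]
  smul_mem' := by
    rintro c x ⟨n, hn⟩
    refine ⟨n, le_trans hn (sup_le_sup_left ?_ _)⟩
    intro r hr
    rw [Ideal.mem_torsionOf_iff] at hr ⊢
    rw [smul_comm, hr, smul_zero]

/-- The `(I,J)`-torsion functor `Γ_{I,J}` on the category of `R`-modules. -/
def pairGamma {R : Type} [CommRing R] (I J : Ideal R) : ModuleCat R ⥤ ModuleCat R where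
  obj M := ModuleCat.of R (pairTorsion I J M)
  map {M N} f := ModuleCat.ofHom (LinearMap.restrict f.hom (fun x hx => by
    obtain ⟨n, hn⟩ := hx
    exact ⟨n, le_trans hn (sup_le_sup_left (fun r hr => by
      rw [Ideal.mem_torsionOf_iff] at hr ⊢
      rw [← map_smul, hr, map_zero]) _)⟩))
  map_id _ := by ext; rfl
  map_comp _ _ := by ext; rfl

instance {R : Type} [CommRing R] (I J : Ideal R) : (pairGamma I J).Additive where
  map_add := by intros; ext; rfl

/-- The local cohomology functor `H^i_{I,J}` with respect to the pair of ideals `(I,J)`: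
the `i`-th right derived functor of `Γ_{I,J}`.  Ordinary local cohomology `H^i_I` is the
case `J = ⊥`. -/
noncomputable def pairLocalCohomology {R : Type} [CommRing R] (I J : Ideal R) (i : ℕ) :
    ModuleCat R ⥤ ModuleCat R :=
  (pairGamma I J).rightDerived i

/-- The cohomological dimension `cd(I,J,M) = sup{i : H^i_{I,J}(M) ≠ 0}` (with `sup ∅ = ⊥`). -/
noncomputable def pairCohomologicalDim {R : Type} [CommRing R] (I J : Ideal R)
    (M : ModuleCat R) : WithBot ℕ∞ :=
  sSup {d : WithBot ℕ∞ | ∃ i : ℕ, d = (i : ℕ∞) ∧ Nontrivial ((pairLocalCohomology I J i).obj M)}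

/-- The set of attached prime ideals of an `R`-module `M`: a prime `p` is attached to `M`
if `p = Ann_R(M/N)` for some submodule `N` of `M`. -/
def attachedPrimes (R M : Type) [CommRing R] [AddCommGroup M] [Module R M] : Set (Ideal R) :=
  {p | p.IsPrime ∧ ∃ N : Submodule R M, p = Module.annihilator R (M ⧸ N)}

/-- A module is secondary if it is nonzero and every `r : R` acts on it either surjectively
or nilpotently. -/
def IsSecondary (R M : Type) [CommRing R] [AddCommGroup M] [Module R M] : Prop :=
  Nontrivial M ∧ ∀ r : R, Function.Surjective (fun m : M => r • m) ∨ ∃ n : ℕ, ∀ m : M, r ^ n • m = 0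

/-- A module is representable if it admits a secondary representation, i.e. it is a finite
sum of secondary submodules. -/
def IsRepresentable (R M : Type) [CommRing R] [AddCommGroup M] [Module R M] : Prop :=
  ∃ s : Finset (Submodule R M), (∀ N ∈ s, IsSecondary R N) ∧ s.sup id = ⊤

/-- The (Krull) dimension of a module, `dim M = dim (R / Ann_R M)`. -/
noncomputable def moduleDim (R M : Type) [CommRing R] [AddCommGroup M] [Module R M] :
    WithBot ℕ∞ :=
  ringKrullDim (R ⧸ Module.annihilator R M)

/-- A submodule is essential if it meets every nonzero submodule nontrivially. -/
def IsEssentialSubmodule {R E : Type} [CommRing R] [AddCommGroup E] [Module R E]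
    (N : Submodule R E) : Prop :=
  ∀ P : Submodule R E, P ≠ ⊥ → N ⊓ P ≠ ⊥

/-- `E` is an injective hull of `K` over `R`: `E` is an injective `R`-module containing a
copy of `K` as an essential submodule.  The Matlis dual of an `R`-module `X` (for local `R`
with residue field `K`) is then `D_R(X) = Hom_R(X, E)`. -/
def IsInjectiveHullOf (R K E : Type) [CommRing R] [AddCommGroup K] [Module R K]
    [AddCommGroup E] [Module R E] : Prop :=
  Module.Injective R E ∧
    ∃ f : K →ₗ[R] E, Function.Injective f ∧ IsEssentialSubmodule (LinearMap.range f)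

/-- `W(I,J)`: the set of prime ideals `p` with `Iⁿ ⊆ p + J` for some `n ≥ 1`. -/
def pairW {R : Type} [CommRing R] (I J : Ideal R) : Set (Ideal R) :=
  {p | p.IsPrime ∧ ∃ n : ℕ, 1 ≤ n ∧ I ^ n ≤ p + J}

/-- `W̃(I,J)`: the set of ideals `a` with `Iⁿ ⊆ a + J` for some `n ≥ 1`. -/
def pairWtilde {R : Type} [CommRing R] (I J : Ideal R) : Set (Ideal R) :=
  {a | ∃ n : ℕ, 1 ≤ n ∧ I ^ n ≤ a + J}

section Aux

variable {R : Type} [CommRing R]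

/-- The `S`-torsion submodule for a submonoid `S`. -/
def sTor (S : Submonoid R) (E : Type) [AddCommGroup E] [Module R E] : Submodule R E where
  carrier := {x | ∃ s ∈ S, s • x = 0}
  zero_mem' := ⟨1, S.one_mem, smul_zero _⟩
  add_mem' := by
    rintro x y ⟨s, hs, hsx⟩ ⟨t, ht, hty⟩
    refine ⟨s * t, S.mul_mem hs ht, ?_⟩
    have h1 : (s * t) • x = 0 := by rw [mul_comm, mul_smul, hsx, smul_zero]
    have h2 : (s * t) • y = 0 := by rw [mul_smul, hty, smul_zero]
    rw [smul_add, h1, h2, add_zero]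
  smul_mem' := by
    rintro c x ⟨s, hs, hsx⟩
    exact ⟨s, hs, by rw [smul_comm, hsx, smul_zero]⟩

lemma mem_sTor_iff {S : Submonoid R} {E : Type} [AddCommGroup E] [Module R E] {x : E} :
    x ∈ sTor S E ↔ ∃ s ∈ S, s • x = 0 := Iff.rfl

theorem sTor_injective [IsNoetherianRing R] (S : Submonoid R) (E : Type) [AddCommGroup E]
    [Module R E] (hE : Module.Injective R E) : Module.Injective R (sTor S E) := by
  apply Module.Baer.injective
  classical
  intro a f
  set fR : a →ₗ[R] E := (sTor S E).subtype.comp f with hfR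
  -- find a single `s ∈ S` killing the range of `f`
  obtain ⟨T, hT⟩ : (LinearMap.range fR).FG := by
    rw [LinearMap.range_eq_map]
    exact Submodule.FG.map _ (IsNoetherian.noetherian ⊤)
  have hTkill : ∀ x ∈ T, ∃ s ∈ S, s • x = 0 := by
    intro x hx
    have : x ∈ LinearMap.range fR := hT ▸ Submodule.subset_span hx
    obtain ⟨y, rfl⟩ := this
    exact (f y).2
  choose! t ht1 ht2 using hTkill
  set s : R := ∏ x ∈ T, t x with hs_def
  have hsS : s ∈ S := S.prod_mem fun x hx => ht1 x hx
  have hker : LinearMap.range fR ≤ LinearMap.ker (LinearMap.lsmul R E s) := by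
    rw [← hT, Submodule.span_le]
    intro x hx
    simp only [SetLike.mem_coe, LinearMap.mem_ker, LinearMap.lsmul_apply]
    rw [hs_def, ← Finset.prod_erase_mul T t hx, mul_smul, ht2 x hx, smul_zero]
  have hsf : ∀ y : a, s • fR y = 0 := fun y => hker ⟨y, rfl⟩
  -- Artin–Rees
  obtain ⟨k, hk⟩ := Ideal.exists_pow_inf_eq_pow_smul (Ideal.span {s}) a
  set c : Ideal R := Ideal.span {s ^ (k + 1)} with hc_def
  have hpow : (Ideal.span {s}) ^ (k + 1) • (⊤ : Submodule R R) = c := by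
    rw [smul_eq_mul, Ideal.mul_top, Ideal.span_singleton_pow]
  have hAR : ∀ (y : R), y ∈ a → y ∈ c →
      y ∈ Ideal.span {s} • ((Ideal.span {s}) ^ k • (⊤ : Submodule R R) ⊓ a) := by
    intro y hy hyc
    have : y ∈ (Ideal.span {s}) ^ (k + 1) • (⊤ : Submodule R R) ⊓ a := by
      rw [hpow]; exact ⟨hyc, hy⟩
    rw [hk (k + 1) (Nat.le_succ k)] at this
    simpa using this
  have hvanish : ∀ (y : R) (hy : y ∈ a), y ∈ c → fR ⟨y, hy⟩ = 0 := by
    intro y hy hyc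
    have hy' := hAR y hy hyc
    have hle : Ideal.span {s} • ((Ideal.span {s}) ^ k • (⊤ : Submodule R R) ⊓ a) ≤ a :=
      le_trans Submodule.smul_le_right inf_le_right
    have key : ∀ (z : R) (hz : z ∈ Ideal.span {s} •
        ((Ideal.span {s}) ^ k • (⊤ : Submodule R R) ⊓ a)), fR ⟨z, hle hz⟩ = 0 := by
      intro z hz
      induction hz using Submodule.smul_induction_on' with
      | smul r hr n hn =>
        obtain ⟨u, hu⟩ := Ideal.mem_span_singleton'.mp hr
        have hna : n ∈ a := hn.2
        have e1 : (⟨r • n, hle (Submodule.smul_mem_smul hr hn)⟩ : a)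
            = u • (s • (⟨n, hna⟩ : a)) := by
          apply Subtype.ext
          show r • n = u • (s • n)
          rw [smul_eq_mul, smul_eq_mul, smul_eq_mul, ← hu]; ring
        rw [e1, map_smul, map_smul, hsf ⟨n, hna⟩, smul_zero]
      | add x hx y hy ihx ihy =>
        have e1 : (⟨x + y, hle (Submodule.add_mem _ hx hy)⟩ : a)
            = ⟨x, hle hx⟩ + ⟨y, hle hy⟩ := rfl
        rw [e1, map_add, ihx, ihy, add_zero]
    exact key y hy'
  -- build a map on `a ⊔ c` extending `f` and vanishing on `c`
  set f1 : (a ⧸ (Submodule.comap a.subtype a ⊓ Submodule.comap a.subtype c)) →ₗ[R] E :=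
    Submodule.liftQ _ fR (by
      rintro ⟨z, hz⟩ hz'
      have hz'' : z ∈ a ⊓ c := hz'
      exact hvanish z hz hz''.2) with hf1
  set e := LinearMap.quotientInfEquivSupQuotient a c with he
  set g : ↥(a ⊔ c) →ₗ[R] E :=
    f1.comp (e.symm.toLinearMap.comp (Submodule.comap (a ⊔ c).subtype c).mkQ) with hg
  have hga : ∀ (y : R) (hy : y ∈ a), g ⟨y, le_sup_left (α := Ideal R) hy⟩ = fR ⟨y, hy⟩ := by
    intro y hy
    have : e.symm (Submodule.Quotient.mk ⟨y, le_sup_left (α := Ideal R) hy⟩)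
        = Submodule.Quotient.mk ⟨y, hy⟩ :=
      LinearMap.quotientInfEquivSupQuotient_symm_apply_left a c _ hy
    simp only [hg, LinearMap.comp_apply, LinearEquiv.coe_toLinearMap, Submodule.mkQ_apply]
    rw [this]
    rfl
  have hgc : ∀ (z : R) (hz : z ∈ c), g ⟨z, le_sup_right (α := Ideal R) hz⟩ = 0 := by
    intro z hz
    have : e.symm (Submodule.Quotient.mk ⟨z, le_sup_right (α := Ideal R) hz⟩) = 0 :=
      LinearMap.quotientInfEquivSupQuotient_symm_apply_right a c hz
    simp only [hg, LinearMap.comp_apply, LinearEquiv.coe_toLinearMap, Submodule.mkQ_apply]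
    rw [this, map_zero]
  -- extend `g` to all of `R` using injectivity of `E`
  obtain ⟨h, hh⟩ := hE.out (a ⊔ c).subtype (Submodule.injective_subtype _) g
  set x : E := h 1 with hx
  have key1 : ∀ (y : R) (hy : y ∈ a), y • x = fR ⟨y, hy⟩ := by
    intro y hy
    rw [hx, ← map_smul, smul_eq_mul, mul_one]
    exact (hh ⟨y, le_sup_left (α := Ideal R) hy⟩).trans (hga y hy)
  have key2 : s ^ (k + 1) • x = 0 := by
    have hz : s ^ (k + 1) ∈ c := Ideal.mem_span_singleton_self _
    rw [hx, ← map_smul, smul_eq_mul, mul_one]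
    exact (hh ⟨s ^ (k + 1), le_sup_right (α := Ideal R) hz⟩).trans (hgc _ hz)
  have hxtor : x ∈ sTor S E := ⟨s ^ (k + 1), S.pow_mem hsS _, key2⟩
  refine ⟨LinearMap.codRestrict (sTor S E) (LinearMap.toSpanSingleton R E x)
    (fun r => ⟨s ^ (k + 1), S.pow_mem hsS _, by
      rw [LinearMap.toSpanSingleton_apply, smul_comm, key2, smul_zero]⟩), ?_⟩
  intro y hy
  apply Subtype.ext
  show y • x = ((f ⟨y, hy⟩ : ↥(sTor S E)) : E)
  rw [key1 y hy]
  rfl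

open CategoryTheory Limits

section Resolution

variable [IsNoetherianRing R] (S : Submonoid R)

/-- An object of `ModuleCat R` is `S`-torsion. -/
def STor (N : ModuleCat R) : Prop := ∀ x : N, ∃ s ∈ S, s • x = 0

/-- `S`-torsion part of an injective module containing `N`. -/
noncomputable def TE (N : ModuleCat R) : ModuleCat R :=
  ModuleCat.of R (↥(sTor S (↥(Injective.under N))))

lemma TE_STor (N : ModuleCat R) : STor S (TE S N) := by
  rintro ⟨x, s, hs, hsx⟩
  exact ⟨s, hs, Subtype.ext hsx⟩

lemma TE_injective (N : ModuleCat R) : Injective (TE S N) := by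
  have h0 : Injective (ModuleCat.of R (↥(Injective.under N))) :=
    (inferInstance : Injective (Injective.under N))
  have h1 : Module.Injective R (↥(Injective.under N)) :=
    Module.injective_module_of_injective_object R _
  have h2 : Module.Injective R (↥(sTor S (↥(Injective.under N)))) :=
    sTor_injective S _ h1
  exact Module.injective_object_of_injective_module R _ (inj := h2)

/-- The canonical embedding of an `S`-torsion module into `TE S N`. -/
noncomputable def ιTE (N : ModuleCat R) (hN : STor S N) : N ⟶ TE S N :=
  ModuleCat.ofHom (LinearMap.codRestrict (sTor S (↥(Injective.under N)))
    (Injective.ι N).hom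
    (fun x => by
      obtain ⟨s, hs, hsx⟩ := hN x
      exact ⟨s, hs, by rw [← map_smul, hsx, map_zero]⟩))

lemma ιTE_injective (N : ModuleCat R) (hN : STor S N) : Function.Injective (ιTE S N hN) := by
  have h := (ModuleCat.mono_iff_injective (Injective.ι N)).mp inferInstance
  intro x y hxy
  exact h (congrArg Subtype.val hxy)

/-- Next object in the `S`-torsion injective resolution. -/
noncomputable def stepObj {A B : ModuleCat R} (g : A ⟶ B) : ModuleCat R :=
  TE S (ModuleCat.of R (↥B ⧸ LinearMap.range g.hom))

lemma coker_STor {A B : ModuleCat R} (g : A ⟶ B) (hB : STor S B) :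
    STor S (ModuleCat.of R (↥B ⧸ LinearMap.range g.hom)) := by
  intro x
  obtain ⟨b, rfl⟩ := Submodule.mkQ_surjective _ x
  obtain ⟨s, hs, hsb⟩ := hB b
  refine ⟨s, hs, ?_⟩
  rw [show s • (LinearMap.range g.hom).mkQ b
    = (LinearMap.range g.hom).mkQ (s • b) from (map_smul _ s b).symm, hsb, map_zero]

/-- Next differential in the `S`-torsion injective resolution. -/
noncomputable def stepMap {A B : ModuleCat R} (g : A ⟶ B) (hB : STor S B) : B ⟶ stepObj S g :=
  ModuleCat.ofHom ((ιTE S (ModuleCat.of R (↥B ⧸ LinearMap.range g.hom))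
      (coker_STor S g hB)).hom.comp
    (LinearMap.range g.hom).mkQ)

lemma comp_stepMap {A B : ModuleCat R} (g : A ⟶ B) (hB : STor S B) :
    g ≫ stepMap S g hB = 0 := by
  ext x
  show (ιTE S (ModuleCat.of R (↥B ⧸ LinearMap.range g.hom)) (coker_STor S g hB))
      ((LinearMap.range g.hom).mkQ (g x)) = 0
  rw [show (LinearMap.range g.hom).mkQ (g x) = 0 from
    (Submodule.Quotient.mk_eq_zero _).mpr ⟨x, rfl⟩, map_zero]

lemma stepMap_ker {A B : ModuleCat R} (g : A ⟶ B) (hB : STor S B) (x : B)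
    (hx : stepMap S g hB x = 0) : x ∈ LinearMap.range g.hom := by
  have h1 : (ιTE S _ (coker_STor S g hB)) ((LinearMap.range g.hom).mkQ x) = 0 := hx
  have h2 : (LinearMap.range g.hom).mkQ x = 0 :=
    ιTE_injective S _ (coker_STor S g hB) (h1.trans (map_zero _).symm)
  rw [Submodule.mkQ_apply, Submodule.Quotient.mk_eq_zero] at h2
  exact h2

end Resolution

section Res2

variable [IsNoetherianRing R] (S : Submonoid R) (Mc : ModuleCat R) (hM : STor S Mc)

/-- The data of the `S`-torsion injective resolution:
`res n = (Xₙ, Xₙ₊₁, dₙ, torsion and injectivity of Xₙ₊₁)`. -/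
noncomputable def res : ∀ _ : ℕ, Σ' (A B : ModuleCat R) (_ : A ⟶ B), STor S B ∧ Injective B
  | 0 => ⟨TE S Mc, stepObj S (ιTE S Mc hM), stepMap S (ιTE S Mc hM) (TE_STor S Mc),
      TE_STor S _, TE_injective S _⟩
  | n + 1 => ⟨(res n).2.1, stepObj S (res n).2.2.1,
      stepMap S (res n).2.2.1 (res n).2.2.2.1, TE_STor S _, TE_injective S _⟩

/-- Objects of the resolution. -/
noncomputable def rX (n : ℕ) : ModuleCat R := (res S Mc hM n).1

/-- Differentials of the resolution. -/
noncomputable def rd (n : ℕ) : rX S Mc hM n ⟶ rX S Mc hM (n + 1) := (res S Mc hM n).2.2.1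

lemma rX_STor (n : ℕ) : STor S (rX S Mc hM n) := by
  cases n with
  | zero => exact TE_STor S Mc
  | succ n => exact (res S Mc hM n).2.2.2.1

lemma rX_injective (n : ℕ) : Injective (rX S Mc hM n) := by
  cases n with
  | zero => exact TE_injective S Mc
  | succ n => exact (res S Mc hM n).2.2.2.2

lemma rd_comp (n : ℕ) : rd S Mc hM n ≫ rd S Mc hM (n + 1) = 0 :=
  comp_stepMap S (rd S Mc hM n) (res S Mc hM n).2.2.2.1

lemma rd_exact (n : ℕ) (x : rX S Mc hM (n + 1)) (hx : rd S Mc hM (n + 1) x = 0) :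
    x ∈ LinearMap.range (rd S Mc hM n).hom :=
  stepMap_ker S (rd S Mc hM n) (res S Mc hM n).2.2.2.1 x hx

lemma rd_zero_exact (x : rX S Mc hM 0) (hx : rd S Mc hM 0 x = 0) :
    x ∈ LinearMap.range (ιTE S Mc hM).hom :=
  stepMap_ker S (ιTE S Mc hM) (TE_STor S Mc) x hx

lemma ι_comp_rd_zero : (ιTE S Mc hM : Mc ⟶ rX S Mc hM 0) ≫ rd S Mc hM 0 = 0 :=
  comp_stepMap S (ιTE S Mc hM) (TE_STor S Mc)

end Res2

section Res3

variable [IsNoetherianRing R] (S : Submonoid R) (Mc : ModuleCat R) (hM : STor S Mc)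

/-- The cochain complex of the `S`-torsion injective resolution. -/
noncomputable def rComplex : CochainComplex (ModuleCat R) ℕ :=
  CochainComplex.of (rX S Mc hM) (rd S Mc hM) (rd_comp S Mc hM)

lemma rComplex_X (n : ℕ) : (rComplex S Mc hM).X n = rX S Mc hM n := rfl

lemma rComplex_exactAt_succ (n : ℕ) : (rComplex S Mc hM).ExactAt (n + 1) := by
  rw [HomologicalComplex.exactAt_iff' _ n (n + 1) (n + 1 + 1) (by simp) (by simp)]
  rw [ShortComplex.moduleCat_exact_iff]
  intro x hx
  have e1 : (rComplex S Mc hM).d n (n + 1) = rd S Mc hM n := CochainComplex.of_d _ _ _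
  have e2 : (rComplex S Mc hM).d (n + 1) (n + 1 + 1) = rd S Mc hM (n + 1) :=
    CochainComplex.of_d _ _ _
  have hx' : (rComplex S Mc hM).d (n + 1) (n + 1 + 1) x = 0 := hx
  rw [e2] at hx'
  obtain ⟨y, hy⟩ := rd_exact S Mc hM n x hx'
  refine ⟨y, ?_⟩
  show (rComplex S Mc hM).d n (n + 1) y = x
  rw [e1]
  exact hy

/-- The torsion injective resolution. -/
noncomputable def rRes : InjectiveResolution Mc where
  cocomplex := rComplex S Mc hM
  injective n := rX_injective S Mc hM n
  ι := (CochainComplex.fromSingle₀Equiv _ _).symm ⟨ιTE S Mc hM, by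
    rw [show (rComplex S Mc hM).d 0 1 = rd S Mc hM 0 from CochainComplex.of_d (rX S Mc hM) (rd S Mc hM) 0]
    exact ι_comp_rd_zero S Mc hM⟩
  quasiIso := ⟨fun n => by
    cases n with
    | zero =>
      rw [CochainComplex.quasiIsoAt₀_iff, ShortComplex.quasiIso_iff_of_zeros]
      · have hex : (ShortComplex.mk (ιTE S Mc hM : Mc ⟶ rX S Mc hM 0) (rd S Mc hM 0)
            (ι_comp_rd_zero S Mc hM)).Exact := by
          rw [ShortComplex.moduleCat_exact_iff]
          intro x hx
          exact rd_zero_exact S Mc hM x hx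
        have hmono : Mono (ShortComplex.mk (ιTE S Mc hM : Mc ⟶ rX S Mc hM 0) (rd S Mc hM 0)
            (ι_comp_rd_zero S Mc hM)).f :=
          (ModuleCat.mono_iff_injective (ιTE S Mc hM)).mpr (ιTE_injective S Mc hM)
        exact (ShortComplex.exact_and_mono_f_iff_of_iso
          (ShortComplex.isoMk (Iso.refl _) (Iso.refl _) (Iso.refl _) (by exact (Category.id_comp _).trans (Category.comp_id _).symm)
            (by exact (Category.id_comp _).trans (Category.comp_id _).symm))).1 ⟨hex, hmono⟩
      all_goals rfl
    | succ n =>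
      rw [quasiIsoAt_iff_exactAt]
      · exact rComplex_exactAt_succ S Mc hM n
      · apply CochainComplex.exactAt_succ_single_obj⟩

end Res3

end Aux

section EP

variable {R : Type} [CommRing R]

/-- Every element's torsion ideal satisfies `Q`. -/
def EP (Q : Ideal R → Prop) (N : Type) [AddCommGroup N] [Module R N] : Prop :=
  ∀ x : N, Q (Ideal.torsionOf R N x)

lemma EP.of_inj {Q : Ideal R → Prop} (hQ : Monotone Q) {N N' : Type} [AddCommGroup N]
    [Module R N] [AddCommGroup N'] [Module R N'] (f : N →ₗ[R] N') (hf : Function.Injective f)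
    (h : EP Q N') : EP Q N := by
  intro x
  refine hQ (fun r hr => ?_) (h (f x))
  rw [Ideal.mem_torsionOf_iff] at hr ⊢
  apply hf
  rw [← map_smul] at hr
  rw [hr, map_zero]

lemma EP.of_surj {Q : Ideal R → Prop} (hQ : Monotone Q) {N N' : Type} [AddCommGroup N]
    [Module R N] [AddCommGroup N'] [Module R N'] (f : N →ₗ[R] N') (hf : Function.Surjective f)
    (h : EP Q N) : EP Q N' := by
  intro x
  obtain ⟨y, rfl⟩ := hf x
  refine hQ (fun r hr => ?_) (h y)
  rw [Ideal.mem_torsionOf_iff] at hr ⊢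
  rw [← map_smul, hr, map_zero]

lemma EP_homology {Q : Ideal R → Prop} (hQ : Monotone Q) (K : CochainComplex (ModuleCat R) ℕ)
    (i : ℕ) (h : EP Q (K.X i)) : EP Q (K.homology i) := by
  have h1 : EP Q (K.cycles i) :=
    EP.of_inj hQ (K.iCycles i).hom ((ModuleCat.mono_iff_injective _).1 inferInstance) h
  exact EP.of_surj hQ (K.homologyπ i).hom ((ModuleCat.epi_iff_surjective _).1 inferInstance) h1

/-- Transfer an element-wise torsion property through the derived functor computed by a chosen
injective resolution. -/
lemma EP_pairLocalCohomology {Q : Ideal R → Prop} (hQ : Monotone Q) (I J : Ideal R)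
    (Mc : ModuleCat R) (IRes : CategoryTheory.InjectiveResolution Mc) (i : ℕ)
    (h : EP Q (↥((((pairGamma I J).mapHomologicalComplex (ComplexShape.up ℕ)).obj
        IRes.cocomplex).X i))) :
    EP Q (↥((pairLocalCohomology I J i).obj Mc)) := by
  have h1 : EP Q ((((pairGamma I J).mapHomologicalComplex
      (ComplexShape.up ℕ)).obj IRes.cocomplex).homology i) := EP_homology hQ _ i h
  have e := IRes.isoRightDerivedObj (pairGamma I J) i
  exact EP.of_inj hQ e.hom.hom ((ModuleCat.mono_iff_injective e.hom).1 inferInstance) h1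

end EP

/-- **Lemma 6(ii).** For any `R`-module `M` and `i ≥ 0`,
`Supp(H^i_{I,J}(M)) ⊆ Supp(M) ∩ W(I,J)`. -/
theorem supp_pair_local_cohomology_subset
    (R : Type) [CommRing R] [IsNoetherianRing R] (I J : Ideal R)
    (M : Type) [AddCommGroup M] [Module R M] (i : ℕ) :
    Module.support R ((pairLocalCohomology I J i).obj (ModuleCat.of R M)) ⊆
      Module.support R M ∩ {p : PrimeSpectrum R | p.asIdeal ∈ pairW I J} := by
  classical
  intro p hp
  obtain ⟨m, hm⟩ := Module.mem_support_iff_exists_annihilator.mp hp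
  have hople : ∀ r : R, r • m = 0 → r ∈ p.asIdeal := fun r hr =>
    hm ((Submodule.mem_annihilator_span_singleton m r).mpr hr)
  have hQW : Monotone (fun a : Ideal R => ∃ n : ℕ, I ^ n ≤ J + a) := by
    rintro a b hab ⟨n, hn⟩
    exact ⟨n, le_trans hn (sup_le_sup_left hab _)⟩
  constructor
  · -- p ∈ Supp M
    by_contra h0
    rw [Module.notMem_support_iff'] at h0
    set S : Submonoid R := p.asIdeal.primeCompl with hS
    have hMtor : STor S (ModuleCat.of R M) := fun x => by
      obtain ⟨r, hr, hrx⟩ := h0 x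
      exact ⟨r, hr, hrx⟩
    set IRes := rRes S (ModuleCat.of R M) hMtor with hIRes
    have hQS : Monotone (fun a : Ideal R => ∃ s ∈ S, s ∈ a) := by
      rintro a b hab ⟨s, hs, hsa⟩
      exact ⟨s, hs, hab hsa⟩
    have hX : EP (fun a : Ideal R => ∃ s ∈ S, s ∈ a)
        (↥(pairTorsion I J (↥(IRes.cocomplex.X i)))) := by
      intro x
      obtain ⟨s, hs, hsx⟩ := rX_STor S (ModuleCat.of R M) hMtor i x.1
      refine ⟨s, hs, (Ideal.mem_torsionOf_iff _ _).mpr ?_⟩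
      apply Subtype.ext
      exact hsx
    have hH := EP_pairLocalCohomology hQS I J (ModuleCat.of R M) IRes i hX
    obtain ⟨s, hs, hsm⟩ := hH m
    exact hs (hople s ((Ideal.mem_torsionOf_iff _ _).mp hsm))
  · -- p ∈ W(I, J)
    set IRes := CategoryTheory.InjectiveResolution.of (ModuleCat.of R M) with hIRes
    have hX : EP (fun a : Ideal R => ∃ n : ℕ, I ^ n ≤ J + a)
        (↥(pairTorsion I J (↥(IRes.cocomplex.X i)))) := by
      intro x
      obtain ⟨n, hn⟩ := x.2
      refine ⟨n, le_trans hn (sup_le_sup_left (fun r hr => ?_) _)⟩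
      rw [Ideal.mem_torsionOf_iff] at hr ⊢
      apply Subtype.ext
      exact hr
    have hH := EP_pairLocalCohomology hQW I J (ModuleCat.of R M) IRes i hX
    obtain ⟨n, hn⟩ := hH m
    have hle : I ^ n ≤ p.asIdeal + J := by
      refine le_trans hn ?_
      rw [add_comm]
      exact sup_le_sup_right (fun r hr => hople r ((Ideal.mem_torsionOf_iff _ _).mp hr)) _
    refine ⟨p.isPrime, max 1 n, le_max_left 1 n, le_trans ?_ hle⟩
    exact Ideal.pow_le_pow_right (le_max_right 1 n)
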